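/- arXiv:1812.08510 — 3 statements merged into one kernel-verified Lean document; each statement's English description precedes it below -/
import Mathlib

section
/- Let G be a connected bipartite multigraph embedded on an orientable surface of genus g, with bipartition classes V_1 and V_2 where |V_1| = 1 and every vertex of V_2 has degree at least 2. Fix k ≥ 2 and let i be the number of faces of size less than 2k. Then i ≥ k/(k-1) - (2k/(k-1))·g + ((k-2)/(k-1))·|V_2|. -/
/-- A connected oriented combinatorial embedding of a (multi)graph, given by a
finite set of darts (directed edges), a rotation permutation `σ` (next dart in
the cyclic order around the tail vertex) and a fixed-point-free involution `α`
(dart reversal). -/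
structure EmbGraph where
  D : Type
  finD : Finite D
  σ : Equiv.Perm D
  α : Equiv.Perm D
  α_invol : ∀ d, α (α d) = d
  α_ne : ∀ d, α d ≠ d

namespace EmbGraph

variable (G : EmbGraph)

instance : Finite G.D := G.finD

/-- The setoid identifying darts in a common cycle of a permutation. -/
def sameCycleSetoid (f : Equiv.Perm G.D) : Setoid G.D :=
  ⟨f.SameCycle, ⟨fun _ => Equiv.Perm.SameCycle.refl f _, fun h => h.symm, fun h h' => h.trans h'⟩⟩

/-- The face permutation: the successor of the directed edge `(u,v)` in its
facial walk is the next edge after `(v,u)` in the rotation around `v`. -/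
def facePerm : Equiv.Perm G.D := G.σ * G.α

/-- Vertices are the orbits of `σ`. -/
def Vert := Quotient (G.sameCycleSetoid G.σ)
/-- Edges are the orbits of `α`. -/
def Edge := Quotient (G.sameCycleSetoid G.α)
/-- Faces are the orbits of the face permutation. -/
def Face := Quotient (G.sameCycleSetoid G.facePerm)

/-- The tail vertex of a dart. -/
def vtx (d : G.D) : G.Vert := Quotient.mk (G.sameCycleSetoid G.σ) d
def edgeOf (d : G.D) : G.Edge := Quotient.mk (G.sameCycleSetoid G.α) d
def faceOf (d : G.D) : G.Face := Quotient.mk (G.sameCycleSetoid G.facePerm) d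

instance : Finite G.Vert := Quotient.finite _
instance : Finite G.Edge := Quotient.finite _
instance : Finite G.Face := Quotient.finite _

noncomputable def numVertices : ℕ := Nat.card G.Vert
noncomputable def numEdges : ℕ := Nat.card G.Edge
noncomputable def numFaces : ℕ := Nat.card G.Face

/-- The Euler characteristic `v - e + f`; the genus `g` of the embedding is
defined by `v - e + f = 2 - 2g`. -/
noncomputable def eulerChar : ℤ := (G.numVertices : ℤ) - (G.numEdges : ℤ) + (G.numFaces : ℤ)

/-- The embedded graph is connected. -/
def Connected : Prop :=
  ∀ a b : G.D, Relation.EqvGen (fun x y => y = G.σ x ∨ y = G.α x) a b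

/-- The degree of a vertex: the number of darts with this tail. -/
noncomputable def degree (v : G.Vert) : ℕ := Nat.card {d : G.D // G.vtx d = v}

/-- The size of a face: the number of darts in its facial walk. -/
noncomputable def faceSize (f : G.Face) : ℕ := Nat.card {d : G.D // G.faceOf d = f}

/-- The underlying simple graph of the embedded graph. -/
def underlying : SimpleGraph G.Vert where
  Adj u v := u ≠ v ∧ ∃ d, G.vtx d = u ∧ G.vtx (G.α d) = v
  symm := ⟨by
    rintro u v ⟨huv, d, hd1, hd2⟩
    exact ⟨huv.symm, G.α d, hd2, by rw [G.α_invol]; exact hd1⟩⟩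
  loopless := ⟨fun v h => h.1 rfl⟩

/-- The embedded graph is a simple graph: no loops and no multiple edges. -/
def IsSimple : Prop :=
  (∀ d, G.vtx d ≠ G.vtx (G.α d)) ∧
    ∀ d d', G.vtx d = G.vtx d' → G.vtx (G.α d) = G.vtx (G.α d') → G.edgeOf d = G.edgeOf d'

/-- The dual graph: vertices are the faces of `G`, two faces being adjacent
if they share an edge. -/
def dualGraph : SimpleGraph G.Face where
  Adj f f' := f ≠ f' ∧ ∃ d, G.faceOf d = f ∧ G.faceOf (G.α d) = f'
  symm := ⟨by
    rintro f f' ⟨hff, d, hd1, hd2⟩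
    exact ⟨hff.symm, G.α d, hd2, by rw [G.α_invol]; exact hd1⟩⟩
  loopless := ⟨fun f h => h.1 rfl⟩

/-- The dual (multi)graph is simple: no face shares an edge with itself, and no
two faces share more than one edge. -/
def DualSimple : Prop :=
  (∀ d, G.faceOf d ≠ G.faceOf (G.α d)) ∧
    ∀ d d', G.faceOf d = G.faceOf d' → G.faceOf (G.α d) = G.faceOf (G.α d') →
      G.edgeOf d = G.edgeOf d'

/-- The dual embedded graph. -/
def dualMap : EmbGraph :=
  ⟨G.D, G.finD, G.σ * G.α, G.α, G.α_invol, G.α_ne⟩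

/-- Identifying the angle following dart `a` with the angle following dart `b`:
the rotation is composed with the transposition of `a` and `b`. -/
noncomputable def identifyAngles (a b : G.D) : EmbGraph :=
  letI : DecidableEq G.D := Classical.decEq _
  ⟨G.D, G.finD, G.σ * Equiv.swap a b, G.α, G.α_invol, G.α_ne⟩

/-- The H-operation applied to the edge given by the dart `d = (x,y)`, where
`x` and `y` have degree `3`.  With rotations `y,w',v` around `x` and `x,w,v'`
around `y`, it identifies the angle of `v` preceding `x` with the angle of `v'`
preceding `y`, and the angle of `w` following `y` with the angle of `w'`
following `x`, merging `v` with `v'` and `w` with `w'`. -/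
noncomputable def Hop (d : G.D) : EmbGraph :=
  (G.identifyAngles (G.σ⁻¹ (G.α (G.σ (G.σ d)))) (G.σ⁻¹ (G.α (G.σ (G.σ (G.α d)))))).identifyAngles
    (G.α (G.σ (G.α d))) (G.α (G.σ d))

end EmbGraph

/-- `S` is a vertex cut-set of `H`: deleting `S` leaves two vertices with no
path between them. -/
def IsCutSet {W : Type*} (H : SimpleGraph W) (S : Set W) : Prop :=
  ∃ a b : ↥(Sᶜ), ¬ (H.induce Sᶜ).Reachable a b

/-- `H` is `n`-connected: it has more than `n` vertices and no cut-set with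
fewer than `n` vertices. -/
def KConnected {W : Type*} (n : ℕ) (H : SimpleGraph W) : Prop :=
  n < Nat.card W ∧ ∀ S : Set W, S.ncard < n → ¬ IsCutSet H S

/-- The set of genera `s` for which a simple `c`-connected embedded graph of
genus `s` with a simple dual having a vertex cut of size `k` exists. -/
def deltaSet (k c : ℕ) : Set ℕ :=
  {s | ∃ G : EmbGraph, G.Connected ∧ G.IsSimple ∧ KConnected c G.underlying ∧
      G.eulerChar = 2 - 2 * (s : ℤ) ∧ G.DualSimple ∧
      ∃ S : Set G.Face, S.ncard = k ∧ IsCutSet G.dualGraph S}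

/-- `δ_k(c)`: the minimum genus of a simple `c`-connected embedded graph whose
simple dual has a vertex cut of size `k`. -/
noncomputable def delta (k c : ℕ) : ℕ := sInf (deltaSet k c)



section Helpers

open Finset

private lemma sum_card_fiber {α β : Type*} [Fintype α] [Fintype β] (φ : α → β) :
    ∑ b : β, Nat.card {a // φ a = b} = Nat.card α := by
  classical
  have h := Fintype.card_congr (Equiv.sigmaFiberEquiv φ)
  rw [Nat.card_eq_fintype_card, ← h, Fintype.card_sigma]
  exact Finset.sum_congr rfl fun b _ => Nat.card_eq_fintype_card

namespace EmbGraph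
variable (G : EmbGraph)

lemma vtx_sigma' (d : G.D) : G.vtx (G.σ d) = G.vtx d :=
  Quotient.sound ⟨-1, by simp⟩

lemma faceOf_facePerm' (d : G.D) : G.faceOf (G.facePerm d) = G.faceOf d :=
  Quotient.sound ⟨-1, by simp⟩

lemma sameCycle_alpha_iff' {d x : G.D} :
    Equiv.Perm.SameCycle G.α x d ↔ x = d ∨ x = G.α d := by
  constructor
  · rintro ⟨n, hn⟩
    have h2 : G.α ^ (2:ℤ) = 1 := by
      ext y
      simp only [zpow_two, Equiv.Perm.mul_apply, G.α_invol, Equiv.Perm.one_apply]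
    have key : G.α ^ n = 1 ∨ G.α ^ n = G.α := by
      rcases Int.even_or_odd n with ⟨m, hm⟩ | ⟨m, hm⟩
      · left
        rw [hm, ← two_mul, zpow_mul, h2, one_zpow]
      · right
        rw [hm, zpow_add, zpow_mul, h2, one_zpow, one_mul, zpow_one]
    rcases key with h | h
    · left; rw [← hn, h]; simp
    · right
      rw [h] at hn
      rw [← hn, G.α_invol]
  · rintro (rfl | rfl)
    · exact ⟨0, rfl⟩
    · exact ⟨1, by simpa using G.α_invol d⟩

/-- Every `α`-orbit (edge) has exactly two darts. -/
lemma card_edge_fiber' (E : G.Edge) : Nat.card {x : G.D // G.edgeOf x = E} = 2 := by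
  classical
  obtain ⟨d, rfl⟩ := Quotient.exists_rep E
  have hset : {x : G.D | G.edgeOf x = Quotient.mk (G.sameCycleSetoid G.α) d}
      = {d, G.α d} := by
    ext x
    simp only [Set.mem_setOf_eq, Set.mem_insert_iff, Set.mem_singleton_iff]
    constructor
    · intro hx
      exact G.sameCycle_alpha_iff'.mp (Quotient.exact hx)
    · intro hx
      exact Quotient.sound (G.sameCycle_alpha_iff'.mpr hx)
  have : Nat.card {x : G.D // G.edgeOf x = Quotient.mk (G.sameCycleSetoid G.α) d}
      = ({d, G.α d} : Set G.D).ncard := by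
    rw [← Nat.card_coe_set_eq, ← hset]
    rfl
  rw [this, Set.ncard_pair (G.α_ne d).symm]

end EmbGraph

end Helpers

/-- `G` connected bipartite multigraph of genus `g`, bipartition
classes `V₁ = {v₀}` and `V₂`, every vertex of `V₂` of degree at least `2`,
`k ≥ 2`, `i` the number of faces of size less than `2k`.  Then
`i ≥ k/(k-1) - (2k/(k-1))·g + ((k-2)/(k-1))·|V₂|`. -/
theorem small_faces_bound_one
    (G : EmbGraph) (hconn : G.Connected)
    (v0 : G.Vert)
    (hbip : ∀ d : G.D, G.vtx d = v0 ↔ G.vtx (G.α d) ≠ v0)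
    (hdeg : ∀ u : G.Vert, u ≠ v0 → 2 ≤ G.degree u)
    (g : ℕ) (heuler : G.eulerChar = 2 - 2 * (g : ℤ))
    (k : ℕ) (hk : 2 ≤ k)
    (i : ℕ) (hi : i = Nat.card {f : G.Face // G.faceSize f < 2 * k}) :
    (k : ℚ) / ((k : ℚ) - 1) - (2 * (k : ℚ) / ((k : ℚ) - 1)) * (g : ℚ)
      + (((k : ℚ) - 2) / ((k : ℚ) - 1)) * ((Nat.card G.Vert : ℚ) - 1) ≤ (i : ℚ) := by
  classical
  haveI : Fintype G.D := Fintype.ofFinite _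
  haveI : Fintype G.Vert := Fintype.ofFinite _
  haveI : Fintype G.Edge := Fintype.ofFinite _
  haveI : Fintype G.Face := Fintype.ofFinite _
  set N : ℕ := Nat.card G.D with hN
  -- alternation facts
  have halt : ∀ d : G.D, G.vtx (G.facePerm d) = G.vtx (G.α d) := by
    intro d
    show G.vtx (G.σ (G.α d)) = G.vtx (G.α d)
    exact G.vtx_sigma' _
  have hbip' : ∀ d : G.D, G.vtx d ≠ v0 → G.vtx (G.α d) = v0 := by
    intro d hd
    by_contra h
    exact hd ((hbip d).mpr h)
  -- step: every face has size at least 2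
  have hface2 : ∀ f : G.Face, 2 ≤ G.faceSize f := by
    intro f
    obtain ⟨d, rfl⟩ := Quotient.exists_rep f
    have hd : G.faceOf d = Quotient.mk (G.sameCycleSetoid G.facePerm) d := rfl
    have hd2 : G.faceOf (G.facePerm d) = Quotient.mk (G.sameCycleSetoid G.facePerm) d := by
      rw [G.faceOf_facePerm']
      exact hd
    have hne : G.facePerm d ≠ d := by
      intro h
      have hv : G.vtx (G.α d) = G.vtx d := by rw [← halt d, h]
      by_cases hc : G.vtx d = v0
      · exact ((hbip d).mp hc) (hv.trans hc)
      · exact hc (hv ▸ hbip' d hc)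
    have : 1 < G.faceSize (Quotient.mk (G.sameCycleSetoid G.facePerm) d) := by
      unfold EmbGraph.faceSize
      rw [Nat.card_eq_fintype_card, Fintype.one_lt_card_iff]
      exact ⟨⟨G.facePerm d, hd2⟩, ⟨d, hd⟩, by simp [hne]⟩
    omega
  -- step: sum of face sizes equals N
  have hfsum : ∑ f : G.Face, G.faceSize f = N := sum_card_fiber G.faceOf
  -- step: number of darts is 2 * numEdges
  have hedges : N = 2 * G.numEdges := by
    have h1 : ∑ E : G.Edge, Nat.card {x : G.D // G.edgeOf x = E} = N :=
      sum_card_fiber G.edgeOf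
    have h2 : ∑ E : G.Edge, Nat.card {x : G.D // G.edgeOf x = E}
        = ∑ _E : G.Edge, 2 :=
      Finset.sum_congr rfl fun E _ => G.card_edge_fiber' E
    rw [← h1, h2, Finset.sum_const, Finset.card_univ, smul_eq_mul,
      EmbGraph.numEdges, Nat.card_eq_fintype_card, mul_comm]
  -- darts at v0 and darts not at v0 are equinumerous
  have hsplit : Nat.card {d : G.D // G.vtx d = v0} = Nat.card {d : G.D // G.vtx d ≠ v0} := by
    refine Nat.card_congr ⟨fun x => ⟨G.α x.1, (hbip x.1).mp x.2⟩,
      fun x => ⟨G.α x.1, hbip' x.1 x.2⟩, ?_, ?_⟩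
    · intro x; ext; exact G.α_invol x.1
    · intro x; ext; exact G.α_invol x.1
  have hsplit2 : Nat.card {d : G.D // G.vtx d = v0} + Nat.card {d : G.D // G.vtx d ≠ v0}
      = N := by
    rw [hN, Nat.card_eq_fintype_card, Nat.card_eq_fintype_card, Nat.card_eq_fintype_card,
      Fintype.card_subtype, Fintype.card_subtype]
    exact Finset.card_filter_add_card_filter_not _
  -- number of darts not at v0 equals numEdges
  set e : ℕ := G.numEdges with hedef
  have hdartsne : Nat.card {d : G.D // G.vtx d ≠ v0} = e := by omega
  -- degree sum over vertices ≠ v0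
  set w : ℕ := Nat.card {u : G.Vert // u ≠ v0} with hw
  have hdegsum : 2 * w ≤ e := by
    rw [← hdartsne]
    haveI : Fintype {d : G.D // G.vtx d ≠ v0} := Fintype.ofFinite _
    haveI : Fintype {u : G.Vert // u ≠ v0} := Fintype.ofFinite _
    have hfib := sum_card_fiber
      (fun d : {d : G.D // G.vtx d ≠ v0} => (⟨G.vtx d.1, d.2⟩ : {u : G.Vert // u ≠ v0}))
    rw [← hfib]
    have hdeg' : ∀ u : {u : G.Vert // u ≠ v0},
        2 ≤ Nat.card {d : {d : G.D // G.vtx d ≠ v0} //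
          (⟨G.vtx d.1, d.2⟩ : {u : G.Vert // u ≠ v0}) = u} := by
      intro u
      have hequiv : {d : {d : G.D // G.vtx d ≠ v0} //
          (⟨G.vtx d.1, d.2⟩ : {u : G.Vert // u ≠ v0}) = u}
          ≃ {d : G.D // G.vtx d = u.1} := by
        refine ⟨fun x => ⟨x.1.1, by have := congrArg Subtype.val x.2; exact this⟩,
          fun y => ⟨⟨y.1, by rw [y.2]; exact u.2⟩, Subtype.ext y.2⟩, ?_, ?_⟩
        · intro x; ext; rfl
        · intro y; ext; rfl
      rw [Nat.card_congr hequiv]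
      exact hdeg u.1 u.2
    calc 2 * w = ∑ _u : {u : G.Vert // u ≠ v0}, 2 := by
          rw [Finset.sum_const, Finset.card_univ, smul_eq_mul, mul_comm,
            hw, Nat.card_eq_fintype_card]
      _ ≤ _ := Finset.sum_le_sum (fun u _ => hdeg' u)
  -- number of vertices
  have hvcount : Nat.card G.Vert = w + 1 := by
    rw [hw, Nat.card_eq_fintype_card, Nat.card_eq_fintype_card, Fintype.card_subtype]
    have := Finset.card_filter_add_card_filter_not
      (s := (Finset.univ : Finset G.Vert)) (fun u => u ≠ v0)
    have h1 : (Finset.univ.filter (fun u : G.Vert => ¬ u ≠ v0)).card = 1 := by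
      have : Finset.univ.filter (fun u : G.Vert => ¬ u ≠ v0) = {v0} := by
        ext u; simp
      rw [this, Finset.card_singleton]
    rw [Finset.card_univ] at this
    omega
  -- small and big faces
  set P : G.Face → Prop := fun f => G.faceSize f < 2 * k with hP
  have hicard : i = (Finset.univ.filter P).card := by
    rw [hi, Nat.card_eq_fintype_card, Fintype.card_subtype]
  set b : ℕ := (Finset.univ.filter (fun f => ¬ P f)).card with hb
  have hib : i + b = G.numFaces := by
    rw [hicard, hb, EmbGraph.numFaces, Nat.card_eq_fintype_card, ← Finset.card_univ]
    exact Finset.card_filter_add_card_filter_not _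
  have hNsum : 2 * i + 2 * k * b ≤ N := by
    have hsplitsum : ∑ f ∈ Finset.univ.filter P, G.faceSize f
        + ∑ f ∈ Finset.univ.filter (fun f => ¬ P f), G.faceSize f = N := by
      rw [← hfsum]
      exact Finset.sum_filter_add_sum_filter_not Finset.univ P G.faceSize
    have hsmall : 2 * i ≤ ∑ f ∈ Finset.univ.filter P, G.faceSize f := by
      rw [hicard, mul_comm]
      simpa using Finset.card_nsmul_le_sum (Finset.univ.filter P) G.faceSize 2
        (fun f _ => hface2 f)
    have hbig : 2 * k * b ≤ ∑ f ∈ Finset.univ.filter (fun f => ¬ P f), G.faceSize f := by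
      rw [hb, mul_comm]
      simpa using Finset.card_nsmul_le_sum (Finset.univ.filter (fun f => ¬ P f))
        G.faceSize (2 * k) (fun f hf => by
          simp only [Finset.mem_filter, hP, not_lt] at hf
          exact hf.2)
    omega
  -- Euler formula in convenient form
  have heuler' : (Nat.card G.Vert : ℤ) - e + (i + b) = 2 - 2 * g := by
    rw [EmbGraph.eulerChar] at heuler
    have : ((i : ℤ) + b) = (G.numFaces : ℤ) := by exact_mod_cast hib
    push_cast at this ⊢
    rw [EmbGraph.numVertices] at heuler
    omega
  -- now pure arithmetic over ℚ
  have hk1 : (1 : ℚ) < (k : ℚ) := by exact_mod_cast hk.trans_lt' one_lt_two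
  have hk1' : (0 : ℚ) < (k : ℚ) - 1 := by linarith
  have hA : (i : ℚ) + (k : ℚ) * b ≤ (e : ℚ) := by
    have h2e : 2 * e = N := hedges.symm
    have : (2 * i + 2 * k * b : ℕ) ≤ (2 * e : ℕ) := by omega
    have := (Nat.cast_le (α := ℚ)).mpr this
    push_cast at this
    linarith
  have hB : 2 * (w : ℚ) ≤ (e : ℚ) := by exact_mod_cast hdegsum
  have hC : ((Nat.card G.Vert : ℚ)) - e + (i + b) = 2 - 2 * g := by
    exact_mod_cast heuler'
  have hD : (Nat.card G.Vert : ℚ) = w + 1 := by exact_mod_cast hvcount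
  have hkw : (2 : ℚ) ≤ (k : ℚ) := by exact_mod_cast hk
  have hfcq : (i : ℚ) + b = 2 - 2 * g - (w + 1) + e := by
    rw [← hD]; linarith [hC]
  have hkmul : (k : ℚ) * ((i : ℚ) + b) = (k : ℚ) * (2 - 2 * g - (w + 1) + e) := by
    rw [hfcq]
  have hprod : 0 ≤ ((k : ℚ) - 1) * ((e : ℚ) - 2 * w) := by
    apply mul_nonneg <;> linarith
  have key : (k : ℚ) - 2 * k * g + ((k : ℚ) - 2) * w ≤ ((k : ℚ) - 1) * i := by
    nlinarith [hA, hkmul, hprod]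
  -- convert goal
  have hgoal : (k : ℚ) / ((k : ℚ) - 1) - (2 * (k : ℚ) / ((k : ℚ) - 1)) * (g : ℚ)
      + (((k : ℚ) - 2) / ((k : ℚ) - 1)) * ((Nat.card G.Vert : ℚ) - 1)
      = ((k : ℚ) - 2 * k * g + ((k : ℚ) - 2) * w) / ((k : ℚ) - 1) := by
    rw [hD]
    field_simp
    try ring
  rw [hgoal, div_le_iff₀ hk1']
  linarith [key]
end

section
/- For c ≥ 3, in a minimum genus embedding of K_{c+1}, with d the minimal nonnegative integer such that (c-2)(c-3) + d ≡ 0 (mod 12), the number of faces F_L of size greater than 3 satisfies |F_L| ≤ d/2, and since d ≤ 10 always holds (d is even and 0 ≤ d ≤ 10), there are at most 5 non-triangular faces. -/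
section AuxLemmas
namespace EmbGraph
variable (G : EmbGraph)

theorem aux_vtx_eq_iff {a b : G.D} : G.vtx a = G.vtx b ↔ G.σ.SameCycle a b :=
  ⟨Quotient.exact, @Quotient.sound _ (G.sameCycleSetoid G.σ) a b⟩

theorem aux_edgeOf_eq_iff {a b : G.D} : G.edgeOf a = G.edgeOf b ↔ G.α.SameCycle a b :=
  ⟨Quotient.exact, @Quotient.sound _ (G.sameCycleSetoid G.α) a b⟩

theorem aux_faceOf_eq_iff {a b : G.D} : G.faceOf a = G.faceOf b ↔ G.facePerm.SameCycle a b :=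
  ⟨Quotient.exact, @Quotient.sound _ (G.sameCycleSetoid G.facePerm) a b⟩

theorem aux_zpow_alpha (i : ℤ) : G.α ^ i = 1 ∨ G.α ^ i = G.α := by
  have hsq : G.α ^ (2:ℤ) = 1 := by
    ext x; simp [zpow_two, pow_two, G.α_invol]
  have h : G.α ^ i = G.α ^ (i % 2) := by
    conv_lhs => rw [← Int.emod_add_mul_ediv i 2]
    rw [zpow_add, zpow_mul, hsq, one_zpow, mul_one]
  rcases Int.emod_two_eq_zero_or_one i with h0 | h0 <;> rw [h, h0] <;> simp

theorem aux_sameCycle_alpha {a b : G.D} : G.α.SameCycle a b ↔ (b = a ∨ b = G.α a) := by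
  constructor
  · rintro ⟨i, rfl⟩
    rcases G.aux_zpow_alpha i with h | h <;> rw [h] <;> simp
  · rintro (rfl | rfl)
    · exact ⟨0, by simp⟩
    · exact ⟨1, by simp⟩

/-- The fiber of `vtx` over `v` has cardinality `degree v`, and is in bijection
with the neighbours of `v` in the underlying graph when `G` is simple. -/
theorem aux_degree (hsimple : G.IsSimple) (v : G.Vert) :
    Nat.card {d : G.D // G.vtx d = v} = Nat.card {u : G.Vert // G.underlying.Adj v u} := by
  apply Nat.card_eq_of_bijective (fun p => ⟨G.vtx (G.α p.1), by
    refine ⟨?_, p.1, p.2, rfl⟩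
    have := hsimple.1 p.1; rw [p.2] at this; exact this⟩)
  constructor
  · rintro ⟨a, ha⟩ ⟨b, hb⟩ hab
    simp only [Subtype.mk.injEq] at hab ⊢
    have h1 : G.vtx a = G.vtx b := by rw [ha, hb]
    have h2 := hsimple.2 a b h1 (congrArg Subtype.val hab)
    rw [aux_edgeOf_eq_iff, aux_sameCycle_alpha] at h2
    rcases h2 with rfl | rfl
    · rfl
    · exact absurd h1 (hsimple.1 a)
  · rintro ⟨u, hne, dd, hd1, hd2⟩
    exact ⟨⟨dd, hd1⟩, by simp [hd2]⟩

/-- No fixed darts of the rotation when every vertex has degree ≥ 2. -/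
theorem aux_sigma_ne (hsimple : G.IsSimple) (hdeg : ∀ v : G.Vert, 2 ≤ Nat.card {u : G.Vert // G.underlying.Adj v u}) (x : G.D) : G.σ x ≠ x := by
  intro hfix
  have hsub : ∀ d' : {d : G.D // G.vtx d = G.vtx x}, d'.1 = x := by
    rintro ⟨a, ha⟩
    obtain ⟨i, hi⟩ := (G.aux_vtx_eq_iff.1 ha.symm)
    show a = x
    rw [← hi, Equiv.Perm.zpow_apply_eq_self_of_apply_eq_self hfix]
  have h1 : Nat.card {d : G.D // G.vtx d = G.vtx x} = 1 := by
    haveI : Subsingleton {d : G.D // G.vtx d = G.vtx x} :=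
      ⟨fun a b => Subtype.ext ((hsub a).trans (hsub b).symm)⟩
    exact Nat.card_of_subsingleton ⟨x, rfl⟩
  have h2 := hdeg (G.vtx x)
  rw [← aux_degree G hsimple] at h2
  omega


theorem aux_face_ge (hsimple : G.IsSimple) (hσ : ∀ x : G.D, G.σ x ≠ x) (f : G.Face) :
    3 ≤ G.faceSize f := by
  obtain ⟨d, rfl⟩ := Quotient.exists_rep f
  have hφd : G.facePerm d = G.σ (G.α d) := rfl
  have h1 : G.facePerm d ≠ d := by
    intro h
    rw [hφd] at h
    have : G.vtx (G.α d) = G.vtx d := G.aux_vtx_eq_iff.2 ⟨1, by simpa using h⟩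
    exact hsimple.1 d this.symm
  have h2 : G.facePerm (G.facePerm d) ≠ d := by
    intro h
    set e := G.facePerm d with he
    have hee : G.σ (G.α e) = d := h
    have hv1 : G.vtx (G.α e) = G.vtx d := G.aux_vtx_eq_iff.2 ⟨1, by rw [zpow_one]; exact hee⟩
    have hv2 : G.vtx (G.α d) = G.vtx e := G.aux_vtx_eq_iff.2 ⟨1, by rw [zpow_one, ← hφd]⟩
    have h4 : G.edgeOf d = G.edgeOf (G.α e) := by
      apply hsimple.2 d (G.α e) hv1.symm
      rw [G.α_invol]
      exact hv2
    rw [aux_edgeOf_eq_iff, aux_sameCycle_alpha] at h4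
    rcases h4 with h4 | h4
    · have h5 : e = G.α d := by rw [← G.α_invol e, h4]
      apply hσ (G.α d)
      rw [← hφd]
      exact h5
    · exact h1 (G.α.injective h4)
  have h3 : G.facePerm (G.facePerm d) ≠ G.facePerm d := fun h => h1 (G.facePerm.injective h)
  have hm1 : G.faceOf (G.facePerm d) = Quotient.mk (G.sameCycleSetoid G.facePerm) d :=
    (G.aux_faceOf_eq_iff.2 ⟨1, by rw [zpow_one]⟩).symm
  have hm2 : G.faceOf (G.facePerm (G.facePerm d)) = Quotient.mk (G.sameCycleSetoid G.facePerm) d :=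
    (G.aux_faceOf_eq_iff.2 ⟨2, by rw [zpow_two]; rfl⟩).symm
  classical
  letI : Fintype G.D := Fintype.ofFinite _
  show 3 ≤ Nat.card {d' : G.D // G.faceOf d' = Quotient.mk (G.sameCycleSetoid G.facePerm) d}
  rw [Nat.card_eq_fintype_card]
  have hc : ({⟨d, rfl⟩, ⟨G.facePerm d, hm1⟩, ⟨G.facePerm (G.facePerm d), hm2⟩} :
      Finset {d' : G.D // G.faceOf d' = Quotient.mk (G.sameCycleSetoid G.facePerm) d}).card = 3 := by
    rw [Finset.card_insert_of_notMem (by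
        simp only [Finset.mem_insert, Finset.mem_singleton, Subtype.mk.injEq, not_or]
        exact ⟨fun h => h1 (congrArg Subtype.val h.symm), fun h => h2 (congrArg Subtype.val h.symm)⟩),
      Finset.card_insert_of_notMem (by
        simp only [Finset.mem_singleton, Subtype.mk.injEq]
        exact fun h => h3 h.symm),
      Finset.card_singleton]
  rw [← hc]
  exact Finset.card_le_univ _

open Finset in
theorem aux_fiber_sum {A B : Type} [Finite A] [Fintype B] (f : A → B) :
    Nat.card A = ∑ b, Nat.card {a : A // f a = b} := by
  classical
  letI : Fintype A := Fintype.ofFinite _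
  rw [Nat.card_congr (Equiv.sigmaFiberEquiv f).symm]
  simp [Nat.card_eq_fintype_card]

theorem aux_edge_fiber (ed : G.Edge) : Nat.card {d : G.D // G.edgeOf d = ed} = 2 := by
  obtain ⟨d0, rfl⟩ := Quotient.exists_rep ed
  rw [Nat.card_eq_two_iff]
  have hm : G.edgeOf (G.α d0) = Quotient.mk (G.sameCycleSetoid G.α) d0 :=
    (G.aux_edgeOf_eq_iff.2 ⟨1, by rw [zpow_one]⟩).symm
  refine ⟨⟨d0, rfl⟩, ⟨G.α d0, hm⟩, ?_, ?_⟩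
  · intro h
    exact G.α_ne d0 (congrArg Subtype.val h).symm
  · apply Set.eq_univ_iff_forall.2
    rintro ⟨a, ha⟩
    have := G.aux_sameCycle_alpha.1 (G.aux_edgeOf_eq_iff.1 (ha : G.edgeOf a = G.edgeOf d0).symm)
    rcases this with rfl | rfl
    · exact Or.inl rfl
    · exact Or.inr rfl

end EmbGraph
end AuxLemmas

/-- in a minimum genus embedding of `K_{c+1}` (`c ≥ 3`), with `d`
minimal such that `(c-2)(c-3) + d ≡ 0 (mod 12)`, we have `d ≤ 10`, the number of
non-triangular faces is at most `d/2`, hence at most `5`. -/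
theorem card_large_faces_min_genus_complete
    (c : ℕ) (hc : 3 ≤ c) (d g : ℕ)
    (hd : (12 : ℤ) ∣ ((c : ℤ) - 2) * ((c : ℤ) - 3) + (d : ℤ))
    (hdmin : ∀ d' : ℕ, (12 : ℤ) ∣ ((c : ℤ) - 2) * ((c : ℤ) - 3) + (d' : ℤ) → d ≤ d')
    (G : EmbGraph) (hconn : G.Connected) (hsimple : G.IsSimple)
    (hK : Nonempty (G.underlying ≃g (⊤ : SimpleGraph (Fin (c + 1)))))
    (hming : 12 * (g : ℤ) = ((c : ℤ) - 2) * ((c : ℤ) - 3) + (d : ℤ))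
    (heuler : G.eulerChar = 2 - 2 * (g : ℤ)) :
    d ≤ 10 ∧ 2 * Nat.card {f : G.Face // 3 < G.faceSize f} ≤ d ∧
      Nat.card {f : G.Face // 3 < G.faceSize f} ≤ 5 := by
  classical
  obtain ⟨e⟩ := hK
  letI : Fintype G.D := Fintype.ofFinite _
  letI : Fintype G.Vert := Fintype.ofFinite _
  letI : Fintype G.Face := Fintype.ofFinite _
  letI : Fintype G.Edge := Fintype.ofFinite _
  -- Part 1 : d ≤ 10
  have hcast : ((c : ℤ) - 2) * ((c : ℤ) - 3) = (((c-2)*(c-3) : ℕ) : ℤ) := by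
    push_cast [Nat.cast_sub (show 2 ≤ c by omega), Nat.cast_sub (show 3 ≤ c by omega)]
    ring
  have hdN : 12 ∣ (c-2)*(c-3) + d := by
    have h := hd
    rw [hcast] at h
    exact_mod_cast h
  have heven : 2 ∣ (c-2)*(c-3) := by
    obtain ⟨k, hk⟩ := Nat.even_mul_succ_self (c-3)
    rw [show c-3+1 = c-2 from by omega] at hk
    exact ⟨k, by rw [mul_comm, hk]; omega⟩
  have h10 : d ≤ 10 := by
    obtain ⟨N, hN⟩ : ∃ N, (c-2)*(c-3) = N := ⟨_, rfl⟩
    rw [hN] at hdN heven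
    have h1 := hdmin ((12 - N % 12) % 12) (by
      rw [hcast, hN]
      exact_mod_cast (show (12:ℕ) ∣ N + (12 - N % 12) % 12 from by omega))
    omega
  -- Part 2 : counting
  have hV : Nat.card G.Vert = c + 1 := by
    rw [Nat.card_congr e.toEquiv, Nat.card_eq_fintype_card, Fintype.card_fin]
  have hnbr : ∀ v : G.Vert, Nat.card {u : G.Vert // G.underlying.Adj v u} = c := by
    intro v
    have equ : {u : G.Vert // G.underlying.Adj v u} ≃ {w : Fin (c+1) // ¬ (e v = w)} :=
      e.toEquiv.subtypeEquiv (fun u => by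
        rw [← e.map_adj_iff]
        simp [SimpleGraph.top_adj, eq_comm])
    rw [Nat.card_congr equ, Nat.card_eq_fintype_card, Fintype.card_subtype_compl,
      Fintype.card_subtype_eq', Fintype.card_fin]
    omega
  have hσne : ∀ x : G.D, G.σ x ≠ x :=
    G.aux_sigma_ne hsimple (fun v => by rw [hnbr v]; omega)
  have hface : ∀ f : G.Face, 3 ≤ G.faceSize f := G.aux_face_ge hsimple hσne
  have hD : Nat.card G.D = (c+1) * c := by
    rw [EmbGraph.aux_fiber_sum G.vtx,
      Finset.sum_congr rfl (fun v _ => (G.aux_degree hsimple v).trans (hnbr v)),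
      Finset.sum_const, smul_eq_mul, Finset.card_univ, ← Nat.card_eq_fintype_card, hV]
  have hE : Nat.card G.D = 2 * Nat.card G.Edge := by
    rw [EmbGraph.aux_fiber_sum G.edgeOf, Finset.sum_congr rfl (fun ed _ => G.aux_edge_fiber ed),
      Finset.sum_const, smul_eq_mul, Finset.card_univ, ← Nat.card_eq_fintype_card, mul_comm]
  have hFsum : Nat.card G.D = ∑ f : G.Face, G.faceSize f := EmbGraph.aux_fiber_sum G.faceOf
  have hLfil : Nat.card {f : G.Face // 3 < G.faceSize f}
      = (Finset.univ.filter (fun f : G.Face => 3 < G.faceSize f)).card := by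
    rw [Nat.card_eq_fintype_card, Fintype.card_subtype]
  set L := Nat.card {f : G.Face // 3 < G.faceSize f} with hLdef
  have hineq : 3 * Nat.card G.Face + L ≤ ∑ f : G.Face, G.faceSize f := by
    have hterm : ∀ f ∈ Finset.univ, 3 + (if 3 < G.faceSize f then 1 else 0) ≤ G.faceSize f := by
      intro f _
      have := hface f
      split <;> omega
    have hs := Finset.sum_le_sum hterm
    rw [Finset.sum_add_distrib, Finset.sum_const, smul_eq_mul, Finset.card_univ,
      ← Finset.card_filter, ← Nat.card_eq_fintype_card, ← hLfil] at hs
    calc 3 * Nat.card G.Face + L = Nat.card G.Face * 3 + L := by ring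
      _ ≤ _ := hs
  -- Arithmetic conclusion
  have heuler' : (Nat.card G.Vert : ℤ) - (Nat.card G.Edge : ℤ) + (Nat.card G.Face : ℤ)
      = 2 - 2*(g:ℤ) := heuler
  have goal2 : 2 * L ≤ d := by
    have c0 : ((Nat.card G.Vert : ℕ) : ℤ) = (c:ℤ) + 1 := by rw [hV]; push_cast; ring
    have c1 : ((c:ℤ)+1) * c = 2 * (Nat.card G.Edge : ℤ) := by
      have := hD.symm.trans hE
      exact_mod_cast this
    have c2 : 3 * (Nat.card G.Face : ℤ) + (L:ℤ) ≤ ((c:ℤ)+1) * c := by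
      have h' : 3 * Nat.card G.Face + L ≤ (c+1) * c := by
        rw [hD] at hFsum
        omega
      exact_mod_cast h'
    have : (2 * L : ℤ) ≤ (d : ℤ) := by nlinarith [hming, heuler', c0, c1, c2]
    exact_mod_cast this
  exact ⟨h10, goal2, by omega⟩
end

section
/- Let G be a connected embedded simple graph with a cut-set V_c, and suppose C_1 and C_2 are two distinct components of G - V_c such that F_{C_1} and F_{C_2} are both nonempty, where F_C is the set of faces whose boundary vertices lie entirely in C ∪ V_c and which are not boundary faces. Then F_{b,C_1}, the set of boundary faces containing at least one vertex of C_1, is a vertex cut-set of the dual graph G*. -/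
/-- The vertex set of a connected component of `G - V_c`. -/
def compOf (G : EmbGraph) (Vc : Set G.Vert)
    (K : (G.underlying.induce Vcᶜ).ConnectedComponent) : Set G.Vert :=
  {v | ∃ h : v ∈ Vcᶜ, (G.underlying.induce Vcᶜ).connectedComponentMk ⟨v, h⟩ = K}

/-- A boundary face: its facial walk contains at least two (possibly equal)
occurrences of vertices of `Vc`. -/
def IsBoundaryFace (G : EmbGraph) (Vc : Set G.Vert) (f : G.Face) : Prop :=
  2 ≤ Nat.card {d : G.D // G.faceOf d = f ∧ G.vtx d ∈ Vc}

/-- `F_{b,C}`: the boundary faces containing at least one vertex of `C`. -/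
def FbC (G : EmbGraph) (Vc : Set G.Vert) (C : Set G.Vert) : Set G.Face :=
  {f | IsBoundaryFace G Vc f ∧ ∃ d : G.D, G.faceOf d = f ∧ G.vtx d ∈ C}

/-- `F_C`: the non-boundary faces all of whose vertices lie in `C ∪ Vc`. -/
def FC (G : EmbGraph) (Vc : Set G.Vert) (C : Set G.Vert) : Set G.Face :=
  {f | ¬ IsBoundaryFace G Vc f ∧ ∀ d : G.D, G.faceOf d = f → G.vtx d ∈ C ∪ Vc}


section AuxProof

variable {G : EmbGraph}

lemma aux_vtx_sigma (d : G.D) : G.vtx (G.σ d) = G.vtx d :=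
  Quotient.sound (Equiv.Perm.sameCycle_apply_left.mpr (Equiv.Perm.SameCycle.refl _ _))

lemma aux_faceOf_facePerm (d : G.D) : G.faceOf (G.facePerm d) = G.faceOf d :=
  Quotient.sound (Equiv.Perm.sameCycle_apply_left.mpr (Equiv.Perm.SameCycle.refl _ _))

lemma aux_facePerm_apply (d : G.D) : G.facePerm d = G.σ (G.α d) := rfl

lemma aux_vtx_facePerm (d : G.D) : G.vtx (G.facePerm d) = G.vtx (G.α d) := by
  rw [aux_facePerm_apply, aux_vtx_sigma]

lemma aux_faceOf_sigma (d : G.D) : G.faceOf (G.σ d) = G.faceOf (G.α d) := by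
  have h : G.facePerm (G.α d) = G.σ d := by
    rw [aux_facePerm_apply, G.α_invol]
  rw [← h, aux_faceOf_facePerm]

lemma aux_adj_vtx (hsimple : G.IsSimple) (d : G.D) :
    G.underlying.Adj (G.vtx d) (G.vtx (G.α d)) :=
  ⟨hsimple.1 d, d, rfl, rfl⟩

lemma aux_facePerm_ne (hsimple : G.IsSimple) (d : G.D) : G.facePerm d ≠ d := by
  intro h
  have hv := aux_vtx_facePerm (G := G) d
  rw [h] at hv
  exact hsimple.1 d hv

lemma aux_boundary_of_two {Vc : Set G.Vert} {f : G.Face} {x y : G.D} (hxy : x ≠ y)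
    (hx : G.faceOf x = f) (hy : G.faceOf y = f)
    (hvx : G.vtx x ∈ Vc) (hvy : G.vtx y ∈ Vc) : IsBoundaryFace G Vc f := by
  have : Nontrivial {d : G.D // G.faceOf d = f ∧ G.vtx d ∈ Vc} :=
    ⟨⟨x, hx, hvx⟩, ⟨y, hy, hvy⟩, by simpa using hxy⟩
  exact Finite.one_lt_card_iff_nontrivial.mpr this

lemma aux_unique_vc {Vc : Set G.Vert} {f : G.Face} (hnb : ¬ IsBoundaryFace G Vc f)
    {x y : G.D} (hx : G.faceOf x = f) (hy : G.faceOf y = f)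
    (hvx : G.vtx x ∈ Vc) (hvy : G.vtx y ∈ Vc) : x = y := by
  by_contra hxy
  exact hnb (aux_boundary_of_two hxy hx hy hvx hvy)

lemma aux_sameCycle_of_faceOf {a b : G.D} (h : G.faceOf a = G.faceOf b) :
    G.facePerm.SameCycle a b :=
  Quotient.exact h

lemma aux_faceOf_iterate (d : G.D) (i : ℕ) :
    G.faceOf ((⇑G.facePerm)^[i] d) = G.faceOf d := by
  induction i with
  | zero => rfl
  | succ j ih => rw [Function.iterate_succ_apply', aux_faceOf_facePerm, ih]

lemma aux_step_adj (hsimple : G.IsSimple) {Vc : Set G.Vert} (z : G.D) (j : ℕ)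
    (h1 : G.vtx ((⇑G.facePerm)^[j] z) ∉ Vc) (h2 : G.vtx ((⇑G.facePerm)^[j + 1] z) ∉ Vc) :
    (G.underlying.induce Vcᶜ).Adj ⟨G.vtx ((⇑G.facePerm)^[j] z), h1⟩
      ⟨G.vtx ((⇑G.facePerm)^[j + 1] z), h2⟩ := by
  have h := aux_adj_vtx hsimple ((⇑G.facePerm)^[j] z)
  rw [← aux_vtx_facePerm, ← Function.iterate_succ_apply' (⇑G.facePerm) j z] at h
  exact h

/-- All non-`Vc` tails of a non-boundary face lie in one component of `G - Vc`. -/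
lemma aux_reach_in_face (hsimple : G.IsSimple) {Vc : Set G.Vert} {f : G.Face}
    (hnb : ¬ IsBoundaryFace G Vc f) {a b : G.D}
    (ha : G.faceOf a = f) (hb : G.faceOf b = f)
    (hva : G.vtx a ∉ Vc) (hvb : G.vtx b ∉ Vc) :
    (G.underlying.induce Vcᶜ).Reachable ⟨G.vtx a, hva⟩ ⟨G.vtx b, hvb⟩ := by
  classical
  by_cases hz : ∃ x, G.faceOf x = f ∧ G.vtx x ∈ Vc
  · obtain ⟨z, hz1, hz2⟩ := hz
    have huniq : ∀ x, G.faceOf x = f → G.vtx x ∈ Vc → x = z := fun x h1 h2 =>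
      aux_unique_vc hnb h1 hz1 h2 hz2
    have hper : Function.IsPeriodicPt (⇑G.facePerm) (orderOf G.facePerm) z := by
      show (⇑G.facePerm)^[orderOf G.facePerm] z = z
      rw [← Equiv.Perm.coe_pow, pow_orderOf_eq_one]
      rfl
    have hnpos : 0 < Function.minimalPeriod (⇑G.facePerm) z :=
      hper.minimalPeriod_pos (orderOf_pos G.facePerm)
    have hface_it : ∀ i, G.faceOf ((⇑G.facePerm)^[i] z) = f := fun i => by
      rw [aux_faceOf_iterate]; exact hz1
    have hnotvc : ∀ i, 0 < i → i < Function.minimalPeriod (⇑G.facePerm) z →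
        G.vtx ((⇑G.facePerm)^[i] z) ∉ Vc := by
      intro i hi hi' hv
      have h0 : (⇑G.facePerm)^[i] z = (⇑G.facePerm)^[0] z := huniq _ (hface_it i) hv
      have := Function.iterate_injOn_Iio_minimalPeriod (f := ⇑G.facePerm) (x := z)
        (Set.mem_Iio.mpr hi') (Set.mem_Iio.mpr hnpos) h0
      omega
    have hchain : ∀ i, ∀ (hi : 0 < i) (hi' : i < Function.minimalPeriod (⇑G.facePerm) z),
        (G.underlying.induce Vcᶜ).Reachable
          ⟨G.vtx ((⇑G.facePerm)^[1] z), hnotvc 1 Nat.one_pos (lt_of_le_of_lt hi hi')⟩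
          ⟨G.vtx ((⇑G.facePerm)^[i] z), hnotvc i hi hi'⟩ := by
      intro i
      induction i with
      | zero => intro hi _; exact absurd hi (lt_irrefl 0)
      | succ j ih =>
        intro hi hj
        rcases Nat.eq_zero_or_pos j with h0 | hjpos
        · subst h0; rfl
        · have hjlt : j < Function.minimalPeriod (⇑G.facePerm) z := by omega
          refine (ih hjpos hjlt).trans ?_
          exact (aux_step_adj hsimple z j (hnotvc j hjpos hjlt)
            (hnotvc (j + 1) hi hj)).reachable
    have hidx : ∀ x, G.faceOf x = f → G.vtx x ∉ Vc →
        ∃ k, 0 < k ∧ k < Function.minimalPeriod (⇑G.facePerm) z ∧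
          (⇑G.facePerm)^[k] z = x := by
      intro x h1 h2
      obtain ⟨i, _, hi2⟩ := (aux_sameCycle_of_faceOf (hz1.trans h1.symm)).exists_pow_eq'
      have hik : (⇑G.facePerm)^[i % Function.minimalPeriod (⇑G.facePerm) z] z = x := by
        rw [Function.iterate_mod_minimalPeriod_eq, ← Equiv.Perm.coe_pow]; exact hi2
      refine ⟨_, ?_, Nat.mod_lt _ hnpos, hik⟩
      rcases Nat.eq_zero_or_pos (i % Function.minimalPeriod (⇑G.facePerm) z) with h0 | h1'
      · exfalso; rw [h0] at hik; exact h2 (hik ▸ hz2)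
      · exact h1'
    obtain ⟨ka, hka0, hkan, hka⟩ := hidx a ha hva
    obtain ⟨kb, hkb0, hkbn, hkb⟩ := hidx b hb hvb
    have r1 := hchain ka hka0 hkan
    have r2 := hchain kb hkb0 hkbn
    have e1 : (⟨G.vtx ((⇑G.facePerm)^[ka] z), hnotvc ka hka0 hkan⟩ : ↥Vcᶜ) =
        ⟨G.vtx a, hva⟩ := Subtype.ext (congrArg G.vtx hka)
    have e2 : (⟨G.vtx ((⇑G.facePerm)^[kb] z), hnotvc kb hkb0 hkbn⟩ : ↥Vcᶜ) =
        ⟨G.vtx b, hvb⟩ := Subtype.ext (congrArg G.vtx hkb)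
    rw [e1] at r1
    rw [e2] at r2
    exact (r1.symm).trans r2
  · push_neg at hz
    have hallnot : ∀ i, G.vtx ((⇑G.facePerm)^[i] a) ∉ Vc := fun i =>
      hz _ (by rw [aux_faceOf_iterate]; exact ha)
    have hchain : ∀ i, (G.underlying.induce Vcᶜ).Reachable
        ⟨G.vtx a, hva⟩ ⟨G.vtx ((⇑G.facePerm)^[i] a), hallnot i⟩ := by
      intro i
      induction i with
      | zero => rfl
      | succ j ih =>
        exact ih.trans (aux_step_adj hsimple a j (hallnot j) (hallnot (j + 1))).reachable
    obtain ⟨i, _, hi2⟩ := (aux_sameCycle_of_faceOf (ha.trans hb.symm)).exists_pow_eq'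
    have hik : (⇑G.facePerm)^[i] a = b := by rw [← Equiv.Perm.coe_pow]; exact hi2
    have hr := hchain i
    have e : (⟨G.vtx ((⇑G.facePerm)^[i] a), hallnot i⟩ : ↥Vcᶜ) =
        ⟨G.vtx b, hvb⟩ := Subtype.ext (congrArg G.vtx hik)
    rw [e] at hr
    exact hr

lemma aux_comp_closed {Vc : Set G.Vert} {K : (G.underlying.induce Vcᶜ).ConnectedComponent}
    {v w : G.Vert} (hv : v ∈ compOf G Vc K) (hw : w ∈ Vcᶜ)
    (hv' : v ∈ Vcᶜ)
    (h : (G.underlying.induce Vcᶜ).Reachable ⟨v, hv'⟩ ⟨w, hw⟩) :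
    w ∈ compOf G Vc K := by
  obtain ⟨hv'', hK⟩ := hv
  refine ⟨hw, ?_⟩
  rw [← hK]
  exact SimpleGraph.ConnectedComponent.sound h.symm

end AuxProof

/-- if `C₁, C₂` are distinct components of `G - V_c` with
`F_{C₁}` and `F_{C₂}` nonempty, then `F_{b,C₁}` is a vertex cut-set of the dual. -/
theorem boundary_faces_cut_dual
    (G : EmbGraph) (hconn : G.Connected) (hsimple : G.IsSimple)
    (Vc : Set G.Vert) (hcut : IsCutSet G.underlying Vc)
    (K1 K2 : (G.underlying.induce Vcᶜ).ConnectedComponent) (hK : K1 ≠ K2)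
    (h1 : (FC G Vc (compOf G Vc K1)).Nonempty)
    (h2 : (FC G Vc (compOf G Vc K2)).Nonempty) :
    IsCutSet G.dualGraph (FbC G Vc (compOf G Vc K1)) := by
  classical
  set C1 := compOf G Vc K1 with hC1
  set C2 := compOf G Vc K2 with hC2
  set S := FbC G Vc C1 with hS
  -- components are disjoint from Vc and from each other
  have hC1Vc : ∀ v ∈ C1, v ∉ Vc := fun v hv => hv.1
  have hC2Vc : ∀ v ∈ C2, v ∉ Vc := fun v hv => hv.1
  have hC12 : ∀ v, v ∈ C1 → v ∈ C2 → False := by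
    intro v h1 h2
    obtain ⟨m1, hk1⟩ := h1
    obtain ⟨m2, hk2⟩ := h2
    exact hK (hk1 ▸ hk2 ▸ rfl)
  obtain ⟨f1, hf1nb, hf1sub⟩ := h1
  obtain ⟨f2, hf2nb, hf2sub⟩ := h2
  have hf1S : f1 ∉ S := fun h => hf1nb h.1
  have hf2S : f2 ∉ S := fun h => hf2nb h.1
  -- every FC-face has a dart with tail outside Vc
  have hnotall : ∀ (f : G.Face), ¬ IsBoundaryFace G Vc f →
      ∃ e, G.faceOf e = f ∧ G.vtx e ∉ Vc := by
    intro f hnb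
    by_contra hcon
    push_neg at hcon
    obtain ⟨d0, hd0⟩ := Quotient.exists_rep f
    have hd0f : G.faceOf d0 = f := hd0
    have hPd0f : G.faceOf (G.facePerm d0) = f := by rw [aux_faceOf_facePerm]; exact hd0f
    exact hnb (aux_boundary_of_two (aux_facePerm_ne hsimple d0).symm hd0f hPd0f
      (hcon _ hd0f) (hcon _ hPd0f))
  obtain ⟨e1, he1f, he1v⟩ := hnotall f1 hf1nb
  obtain ⟨e2, he2f, he2v⟩ := hnotall f2 hf2nb
  have he1C : G.vtx e1 ∈ C1 := (hf1sub e1 he1f).resolve_right he1v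
  have he2C : G.vtx e2 ∈ C2 := (hf2sub e2 he2f).resolve_right he2v
  -- the invariant
  set B : G.Face → Prop :=
    fun f => (∀ e, G.faceOf e = f → G.vtx e ∈ C1 ∪ Vc) ∧
      ∃ e, G.faceOf e = f ∧ G.vtx e ∈ C1 with hB
  have hBf1 : B f1 := ⟨hf1sub, e1, he1f, he1C⟩
  have hnBf2 : ¬ B f2 := by
    rintro ⟨hall, -⟩
    rcases hall e2 he2f with h | h
    · exact hC12 _ h he2C
    · exact hC2Vc _ he2C h
  -- the key step lemma
  have hstep : ∀ f f' : G.Face, f ∉ S → f' ∉ S → G.dualGraph.Adj f f' → B f → B f' := by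
    rintro f f' hfS hf'S ⟨-, d, hd, hd'⟩ hBf
    have hu : G.vtx d ∈ C1 ∪ Vc := hBf.1 d hd
    have hfPd : G.faceOf (G.facePerm d) = f := by rw [aux_faceOf_facePerm]; exact hd
    have hw : G.vtx (G.α d) ∈ C1 ∪ Vc := by
      have := hBf.1 (G.facePerm d) hfPd
      rwa [aux_vtx_facePerm] at this
    have hσd : G.faceOf (G.σ d) = f' := by rw [aux_faceOf_sigma]; exact hd'
    have hvσd : G.vtx (G.σ d) = G.vtx d := aux_vtx_sigma d
    have hne_uw : G.vtx d ≠ G.vtx (G.α d) := hsimple.1 d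
    by_cases hbf : IsBoundaryFace G Vc f'
    · -- f' boundary but not in S: it has no C1 tail, forcing both endpoints in Vc,
      -- hence f itself would be a boundary face with a C1 vertex, i.e. in S.
      have hnoC1 : ∀ e, G.faceOf e = f' → G.vtx e ∉ C1 := by
        intro e he hec
        exact hf'S ⟨hbf, e, he, hec⟩
      have huVc : G.vtx d ∈ Vc := by
        rcases hu with h | h
        · exact absurd (hvσd ▸ h : G.vtx (G.σ d) ∈ C1) (hnoC1 _ hσd)
        · exact h
      have hwVc : G.vtx (G.α d) ∈ Vc := by
        rcases hw with h | h
        · exact absurd h (hnoC1 _ hd')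
        · exact h
      have hbf_f : IsBoundaryFace G Vc f :=
        aux_boundary_of_two (aux_facePerm_ne hsimple d).symm hd hfPd huVc
          (by rwa [aux_vtx_facePerm])
      exact absurd (⟨hbf_f, hBf.2⟩ : f ∈ S) hfS
    · -- f' not boundary: find a C1 tail of f', then spread along the facial walk
      have he0 : ∃ e0, G.faceOf e0 = f' ∧ G.vtx e0 ∈ C1 := by
        rcases hu with huC | huVc
        · exact ⟨G.σ d, hσd, by rwa [hvσd]⟩
        · have hσα : G.σ d ≠ G.α d := by
            intro h
            exact hne_uw (by rw [← hvσd, h])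
          have hwnV : G.vtx (G.α d) ∉ Vc := by
            intro hwV
            exact hbf (aux_boundary_of_two hσα hσd hd' (by rwa [hvσd]) hwV)
          exact ⟨G.α d, hd', hw.resolve_right hwnV⟩
      obtain ⟨e0, he0f, he0C⟩ := he0
      have he0v : G.vtx e0 ∉ Vc := hC1Vc _ he0C
      refine ⟨?_, e0, he0f, he0C⟩
      intro e hef
      by_cases hev : G.vtx e ∈ Vc
      · exact Or.inr hev
      · left
        have hr := aux_reach_in_face hsimple hbf he0f hef he0v hev
        exact aux_comp_closed he0C hev he0v hr
  -- conclude
  refine ⟨⟨f1, hf1S⟩, ⟨f2, hf2S⟩, ?_⟩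
  intro hreach
  obtain ⟨w⟩ := hreach
  have hwalk : ∀ (a b : ↥(Sᶜ)), (G.dualGraph.induce Sᶜ).Walk a b → B a.1 → B b.1 := by
    intro a b w
    induction w with
    | nil => exact id
    | @cons x y zz h p ih =>
      intro hBa
      have hadj : G.dualGraph.Adj x.1 y.1 := h
      exact ih (hstep x.1 y.1 x.2 y.2 hadj hBa)
  exact hnBf2 (hwalk _ _ w hBf1)
end
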